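/- Let R be a commutative local ring with maximal ideal 𝔪 whose residue field R/𝔪 is isomorphic to 𝔽₂, and let Φ be the 4×4 matrix over R with 0 in every diagonal entry and 1 in every off-diagonal entry. For all units a, b, c, d of R and D := diag(a,b,c,d), there exists an invertible 4×4 matrix P over R such that P ≡ Φ (mod 𝔪) and P·D·Pᵀ = diag(t,u,v,w), where t, u, v, w are units of R satisfying, in the group of square classes Rˣ/(Rˣ)²: [t] = [a·b·c·d·u·v·w], [u] = [a + c⁻¹ + d⁻¹], [v] = [a⁻¹ + b⁻¹ + d] and [w] = [a + b + a²·c]. -/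

import Mathlib

noncomputable section

/-- The subgroup of squares of units of a commutative ring. -/
def squareUnits (R : Type) [CommRing R] : Subgroup Rˣ :=
  (powMonoidHom 2 : Rˣ →* Rˣ).range

/-- The group of square classes `Rˣ/(Rˣ)²`. -/
def SqCl (R : Type) [CommRing R] : Type := Rˣ ⧸ squareUnits R

instance (R : Type) [CommRing R] : CommGroup (SqCl R) :=
  QuotientGroup.Quotient.commGroup (squareUnits R)

/-- The square class `[a]` of a unit `a`. -/
def cls {R : Type} [CommRing R] (a : Rˣ) : SqCl R := QuotientGroup.mk a

/-- The group ring `ℤ[Rˣ/(Rˣ)²]`. -/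
abbrev GRing (R : Type) [CommRing R] := MonoidAlgebra ℤ (SqCl R)

/-- The generator `[a]` of the group ring, for a unit `a`. -/
def gen {R : Type} [CommRing R] (a : Rˣ) : GRing R :=
  MonoidAlgebra.of ℤ (SqCl R) (cls a)

/-- The set of relations defining the Grothendieck–Witt ring of a (connected semi-)local ring:
`([a₁]+[a₂]+[a₃]+[a₄]) − ([b₁]+[b₂]+[b₃]+[b₄])` whenever there exists `P ∈ GL₄(R)` with
`P ⬝ diag(a₁,…,a₄) ⬝ Pᵀ = diag(b₁,…,b₄)`. -/
def gwRel (R : Type) [CommRing R] : Set (GRing R) :=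
  {x | ∃ (a b : Fin 4 → Rˣ) (P : Matrix (Fin 4) (Fin 4) R),
    IsUnit P.det ∧
    P * Matrix.diagonal (fun i => (a i : R)) * P.transpose =
      Matrix.diagonal (fun i => (b i : R)) ∧
    x = (∑ i, gen (a i)) - (∑ i, gen (b i))}

/-- The (symmetric) Grothendieck–Witt ring of `R`, presented à la Knebusch–Rosenberg–Ware. -/
abbrev GW (R : Type) [CommRing R] := GRing R ⧸ Ideal.span (gwRel R)

/-- The class `[a] ∈ GW(R)` of a unit `a`. -/
def gw {R : Type} [CommRing R] (a : Rˣ) : GW R :=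
  Ideal.Quotient.mk (Ideal.span (gwRel R)) (gen a)

/-- The (symmetric) Witt ring of `R` : the quotient of `GW(R)` by the ideal generated by the
hyperbolic element `[1] + [-1]`. -/
abbrev Wr (R : Type) [CommRing R] := GW R ⧸ Ideal.span {gw (R := R) 1 + gw (-1)}

/-- The class in the Witt ring of a unit `a`. -/
def wcl {R : Type} [CommRing R] (a : Rˣ) : Wr R :=
  Ideal.Quotient.mk (Ideal.span {gw (R := R) 1 + gw (-1)}) (gw a)

/-- The 4×4 matrix with `0` on the diagonal and `1` everywhere else. -/
def PhiMat (R : Type) [CommRing R] : Matrix (Fin 4) (Fin 4) R :=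
  fun i j => if i = j then 0 else 1

lemma cls_mul {R : Type} [CommRing R] (x y : Rˣ) : cls (x * y) = cls x * cls y := rfl

lemma cls_sq {R : Type} [CommRing R] (z : Rˣ) : cls (z ^ 2) = 1 :=
  (QuotientGroup.eq_one_iff _).mpr ⟨z, rfl⟩

lemma cls_mul_sq {R : Type} [CommRing R] (x z : Rˣ) : cls (x * z ^ 2) = cls x := by
  rw [cls_mul, cls_sq, mul_one]

set_option maxHeartbeats 800000 in
open IsLocalRing in
/-- Over a commutative local ring with residue field `𝔽₂`, every diagonal
matrix `diag(a,b,c,d)` with unit entries is congruent, via an invertible matrix `P ≡ Φ (mod 𝔪)`,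
to a diagonal matrix `diag(t,u,v,w)` with `[t] = [abcd·uvw]`, `[u] = [a + c⁻¹ + d⁻¹]`,
`[v] = [a⁻¹ + b⁻¹ + d]` and `[w] = [a + b + a²c]` in `Rˣ/(Rˣ)²`. -/
theorem exists_congruent_phi_mod_m
    (R : Type) [CommRing R] [IsLocalRing R]
    (h2 : Nonempty (ResidueField R ≃+* ZMod 2)) (a b c d : Rˣ) :
    ∃ (P : Matrix (Fin 4) (Fin 4) R) (t u v w : Rˣ),
      IsUnit P.det ∧
      (∀ i j, P i j - PhiMat R i j ∈ maximalIdeal R) ∧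
      P * Matrix.diagonal ![(a : R), (b : R), (c : R), (d : R)] * P.transpose =
        Matrix.diagonal ![(t : R), (u : R), (v : R), (w : R)] ∧
      cls t = cls (a * b * c * d * (u * v * w)) ∧
      (∃ u' : Rˣ, (u' : R) = (a : R) + ((c⁻¹ : Rˣ) : R) + ((d⁻¹ : Rˣ) : R) ∧ cls u = cls u') ∧
      (∃ v' : Rˣ, (v' : R) = ((a⁻¹ : Rˣ) : R) + ((b⁻¹ : Rˣ) : R) + (d : R) ∧ cls v = cls v') ∧
      (∃ w' : Rˣ, (w' : R) = (a : R) + (b : R) + (a : R) ^ 2 * (c : R) ∧ cls w = cls w') := by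
  obtain ⟨e⟩ := h2
  have h20 : (2 : ResidueField R) = 0 := by
    apply e.injective
    rw [show (2 : ResidueField R) = 1 + 1 by norm_num, map_add, map_one, map_zero]
    decide
  have hres : ∀ x : Rˣ, residue R (x : R) = 1 := by
    intro x
    have hne : residue R (x : R) ≠ 0 := (x.isUnit.map (residue R)).ne_zero
    have h1 : e (residue R (x : R)) = 1 := by
      have hall : ∀ z : ZMod 2, z ≠ 0 → z = 1 := by decide
      exact hall _ (fun h => hne (e.injective (by rw [h, map_zero])))
    apply e.injective; rw [h1, map_one]
  have hmem : ∀ r : R, residue R r = 0 → r ∈ maximalIdeal R := fun r h =>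
    Ideal.Quotient.eq_zero_iff_mem.mp h
  have hu : ∀ r : R, residue R r = 1 → IsUnit r := by
    intro r h
    by_contra hn
    have hr : r ∈ maximalIdeal R := (mem_maximalIdeal r).mpr hn
    have h0 : residue R r = 0 := Ideal.Quotient.eq_zero_iff_mem.mpr hr
    rw [h0] at h
    exact one_ne_zero h.symm
  have mkU : ∀ r : R, residue R r = 1 → ∃ x : Rˣ, (x : R) = r := fun r h =>
    ⟨(hu r h).unit, (hu r h).unit_spec⟩
  -- the four diagonal values
  obtain ⟨t, ht⟩ := mkU
    (((a:R)*(c:R) - (b:R)*(d:R))^2*(a:R)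
      + ((a:R)*(c:R)+(a:R)*(d:R)+(a:R)^2*(c:R)*(d:R))^2*(b:R)
      + ((a:R)+(b:R)+(a:R)*(b:R)*(d:R))^2*(c:R)
      + ((a:R)+(b:R)+(a:R)^2*(c:R))^2*(d:R))
    (by simp only [map_add, map_mul, map_pow, map_sub, hres]
        linear_combination (13 : ResidueField R) * h20)
  obtain ⟨u, hU⟩ := mkU ((a:R)*(c:R)^2*(d:R)^2 + (c:R)*(d:R)^2 + (c:R)^2*(d:R))
    (by simp only [map_add, map_mul, map_pow, hres]
        linear_combination h20)
  obtain ⟨v, hV⟩ := mkU ((a:R)*(b:R)^2 + (a:R)^2*(b:R) + (a:R)^2*(b:R)^2*(d:R))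
    (by simp only [map_add, map_mul, map_pow, hres]
        linear_combination h20)
  obtain ⟨w, hW⟩ := mkU ((a:R) + (b:R) + (a:R)^2*(c:R))
    (by simp only [map_add, map_mul, map_pow, hres]
        linear_combination h20)
  obtain ⟨u', hU'⟩ := mkU ((a:R) + ((c⁻¹ : Rˣ) : R) + ((d⁻¹ : Rˣ) : R))
    (by simp only [map_add, hres]
        linear_combination h20)
  obtain ⟨v', hV'⟩ := mkU (((a⁻¹ : Rˣ) : R) + ((b⁻¹ : Rˣ) : R) + (d:R))
    (by simp only [map_add, hres]
        linear_combination h20)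
  -- the matrix identity
  have hmat : (Matrix.of
      ![![(a:R)*(c:R) - (b:R)*(d:R),
          (a:R)*(c:R)+(a:R)*(d:R)+(a:R)^2*(c:R)*(d:R),
          -((a:R)+(b:R)+(a:R)*(b:R)*(d:R)),
          -((a:R)+(b:R)+(a:R)^2*(c:R))],
        ![(c:R)*(d:R), 0, -(d:R), (c:R)],
        ![(b:R), -(a:R), 0, -((a:R)*(b:R))],
        ![1, 1, (a:R), 0]]) *
      Matrix.diagonal ![(a : R), (b : R), (c : R), (d : R)] *
      (Matrix.of
      ![![(a:R)*(c:R) - (b:R)*(d:R),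
          (a:R)*(c:R)+(a:R)*(d:R)+(a:R)^2*(c:R)*(d:R),
          -((a:R)+(b:R)+(a:R)*(b:R)*(d:R)),
          -((a:R)+(b:R)+(a:R)^2*(c:R))],
        ![(c:R)*(d:R), 0, -(d:R), (c:R)],
        ![(b:R), -(a:R), 0, -((a:R)*(b:R))],
        ![1, 1, (a:R), 0]]).transpose =
      Matrix.diagonal ![(t : R), (u : R), (v : R), (w : R)] := by
    ext i j
    fin_cases i <;> fin_cases j <;>
      simp only [Matrix.mul_apply, Matrix.mul_diagonal, Matrix.transpose_apply,
        Matrix.diagonal_apply, Matrix.of_apply, Fin.zero_eta, Fin.mk_one, Fin.reduceFinMk,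
        Matrix.cons_val_zero, Matrix.cons_val_one, Matrix.cons_val_two, Matrix.cons_val_three,
        Matrix.head_cons, Matrix.tail_cons, Fin.sum_univ_four, Fin.reduceEq, reduceIte,
        ite_true, ite_false, ht, hU, hV, hW] <;>
      ring
  -- determinant identity
  have hdetid := congrArg Matrix.det hmat
  rw [Matrix.det_mul, Matrix.det_mul, Matrix.det_transpose,
    Matrix.det_diagonal, Matrix.det_diagonal, Fin.prod_univ_four] at hdetid
  simp only [Fin.prod_univ_four, Matrix.cons_val_zero, Matrix.cons_val_one,
    Matrix.cons_val_two, Matrix.cons_val_three, Matrix.head_cons, Matrix.tail_cons] at hdetid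
  have hinv : ((t:R)*(u:R)*(v:R)*(w:R)) * (((t*u*v*w)⁻¹ : Rˣ) : R) = 1 := by
    have := Units.mul_inv (t*u*v*w)
    push_cast at this
    linear_combination this
  have hdu : IsUnit (Matrix.of
      ![![(a:R)*(c:R) - (b:R)*(d:R),
          (a:R)*(c:R)+(a:R)*(d:R)+(a:R)^2*(c:R)*(d:R),
          -((a:R)+(b:R)+(a:R)*(b:R)*(d:R)),
          -((a:R)+(b:R)+(a:R)^2*(c:R))],
        ![(c:R)*(d:R), 0, -(d:R), (c:R)],
        ![(b:R), -(a:R), 0, -((a:R)*(b:R))],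
        ![1, 1, (a:R), 0]]).det := by
    refine IsUnit.of_mul_eq_one
      ((Matrix.of
      ![![(a:R)*(c:R) - (b:R)*(d:R),
          (a:R)*(c:R)+(a:R)*(d:R)+(a:R)^2*(c:R)*(d:R),
          -((a:R)+(b:R)+(a:R)*(b:R)*(d:R)),
          -((a:R)+(b:R)+(a:R)^2*(c:R))],
        ![(c:R)*(d:R), 0, -(d:R), (c:R)],
        ![(b:R), -(a:R), 0, -((a:R)*(b:R))],
        ![1, 1, (a:R), 0]]).det * ((a:R)*(b:R)*(c:R)*(d:R)) * (((t*u*v*w)⁻¹ : Rˣ) : R)) ?_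
    linear_combination (((t*u*v*w)⁻¹ : Rˣ) : R) * hdetid + hinv
  obtain ⟨s, hs⟩ : ∃ s : Rˣ, (s : R) = (Matrix.of
      ![![(a:R)*(c:R) - (b:R)*(d:R),
          (a:R)*(c:R)+(a:R)*(d:R)+(a:R)^2*(c:R)*(d:R),
          -((a:R)+(b:R)+(a:R)*(b:R)*(d:R)),
          -((a:R)+(b:R)+(a:R)^2*(c:R))],
        ![(c:R)*(d:R), 0, -(d:R), (c:R)],
        ![(b:R), -(a:R), 0, -((a:R)*(b:R))],
        ![1, 1, (a:R), 0]]).det := ⟨hdu.unit, hdu.unit_spec⟩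
  refine ⟨_, t, u, v, w, hdu, ?_, hmat, ?_, ⟨u', hU', ?_⟩, ⟨v', hV', ?_⟩, ⟨w, hW, rfl⟩⟩
  · -- congruence to Φ mod 𝔪
    intro i j
    apply hmem
    fin_cases i <;> fin_cases j <;>
      simp only [PhiMat, Matrix.of_apply, Fin.zero_eta, Fin.mk_one, Fin.reduceFinMk,
        Matrix.cons_val_zero, Matrix.cons_val_one, Matrix.cons_val_two, Matrix.cons_val_three,
        Matrix.head_cons, Matrix.tail_cons, Fin.reduceEq, reduceIte, ite_true, ite_false,
        map_sub, map_add, map_mul, map_pow, map_neg, map_one, map_zero, hres] <;>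
      first
        | ring1
        | linear_combination h20
        | linear_combination -h20
        | linear_combination (2 : ResidueField R) * h20
        | linear_combination (-2 : ResidueField R) * h20
  · -- cls t = cls (abcd · uvw)
    have key : t * (u * v * w) = s ^ 2 * (a * b * c * d) := by
      apply Units.ext
      push_cast
      rw [hs]
      linear_combination -hdetid
    have hord : ∀ g : SqCl R, g * g = 1 := by
      intro g
      refine QuotientGroup.induction_on g fun z => ?_
      show ((z * z : Rˣ) : Rˣ ⧸ squareUnits R) = 1
      exact (QuotientGroup.eq_one_iff _).mpr ⟨z, by rw [powMonoidHom_apply, sq]⟩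
    have h := congrArg cls key
    simp only [cls_mul] at h ⊢
    rw [cls_sq, one_mul] at h
    rw [← h, mul_assoc, hord, mul_one]
  · -- cls u = cls u'
    have huu : u = u' * (c * d) ^ 2 := by
      apply Units.ext
      push_cast
      rw [hU, hU']
      linear_combination (-(c:R)*(d:R)^2) * Units.mul_inv c + (-(c:R)^2*(d:R)) * Units.mul_inv d
    rw [huu, cls_mul_sq]
  · -- cls v = cls v'
    have hvv : v = v' * (a * b) ^ 2 := by
      apply Units.ext
      push_cast
      rw [hV, hV']
      linear_combination (-(a:R)*(b:R)^2) * Units.mul_inv a + (-(a:R)^2*(b:R)) * Units.mul_inv b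
    rw [hvv, cls_mul_sq]

end
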